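/- Let F be a field and n a positive integer such that the characteristic of F is zero or does not divide n. Then all irreducible factors of the n-th cyclotomic polynomial Φ_n(X) in F[X] have the same degree; that is, if f and g are monic irreducible polynomials over F each dividing Φ_n(X), then deg f = deg g. -/

import Mathlib

open Polynomial IntermediateField

theorem stmt_0 (F : Type) [Field F] (n : ℕ) (hn : 0 < n)
    (hchar : ringChar F = 0 ∨ ¬ (ringChar F ∣ n))
    (f g : Polynomial F) (hf : f.Monic) (hfi : Irreducible f)
    (hfd : f ∣ Polynomial.cyclotomic n F)
    (hg : g.Monic) (hgi : Irreducible g) (hgd : g ∣ Polynomial.cyclotomic n F) :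
    f.natDegree = g.natDegree := by
  have hn0 : NeZero (n : F) := by
    constructor
    rw [Ne, CharP.cast_eq_zero_iff F (ringChar F)]
    rcases hchar with h | h
    · rw [h]; simpa using hn.ne'
    · exact h
  let K := AlgebraicClosure F
  have hnK : NeZero (n : K) := NeZero.of_faithfulSMul F K n
  have hnn : NeZero n := ⟨hn.ne'⟩
  obtain ⟨z, hz⟩ : ∃ z : K, Polynomial.aeval z f = 0 :=
    IsAlgClosed.exists_aeval_eq_zero K f
      (degree_pos_of_irreducible hfi).ne'
  obtain ⟨w, hw⟩ : ∃ w : K, Polynomial.aeval w g = 0 :=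
    IsAlgClosed.exists_aeval_eq_zero K g
      (degree_pos_of_irreducible hgi).ne'
  have hzprim : IsPrimitiveRoot z n := by
    rw [← Polynomial.isRoot_cyclotomic_iff (R := K)]
    have : (Polynomial.cyclotomic n K) = (Polynomial.cyclotomic n F).map (algebraMap F K) := by
      rw [Polynomial.map_cyclotomic]
    rw [this]
    obtain ⟨q, hq⟩ := hfd
    rw [hq, Polynomial.map_mul]
    simp [IsRoot, Polynomial.eval_mul, show (f.map (algebraMap F K)).eval z = 0 from by
      rwa [Polynomial.eval_map, ← Polynomial.aeval_def]]
  have hwprim : IsPrimitiveRoot w n := by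
    rw [← Polynomial.isRoot_cyclotomic_iff (R := K)]
    rw [show (Polynomial.cyclotomic n K) = (Polynomial.cyclotomic n F).map (algebraMap F K) from
      (Polynomial.map_cyclotomic _ _).symm]
    obtain ⟨q, hq⟩ := hgd
    rw [hq, Polynomial.map_mul]
    simp [IsRoot, Polynomial.eval_mul, show (g.map (algebraMap F K)).eval w = 0 from by
      rwa [Polynomial.eval_map, ← Polynomial.aeval_def]]
  have hfz : f = minpoly F z := minpoly.eq_of_irreducible_of_monic hfi hz hf
  have hgw : g = minpoly F w := minpoly.eq_of_irreducible_of_monic hgi hw hg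
  have hzint : IsIntegral F z := ⟨f, hf, by rwa [← Polynomial.aeval_def]⟩
  have hwint : IsIntegral F w := ⟨g, hg, by rwa [← Polynomial.aeval_def]⟩
  have hadj : F⟮z⟯ = F⟮w⟯ := by
    obtain ⟨i, _, hi⟩ := hzprim.eq_pow_of_pow_eq_one hwprim.pow_eq_one
    obtain ⟨j, _, hj⟩ := hwprim.eq_pow_of_pow_eq_one hzprim.pow_eq_one
    apply le_antisymm
    · rw [IntermediateField.adjoin_simple_le_iff, ← hj]
      exact pow_mem (IntermediateField.mem_adjoin_simple_self F w) j
    · rw [IntermediateField.adjoin_simple_le_iff, ← hi]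
      exact pow_mem (IntermediateField.mem_adjoin_simple_self F z) i
  rw [hfz, hgw, ← IntermediateField.adjoin.finrank hzint, ← IntermediateField.adjoin.finrank hwint,
    hadj]
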